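/- Let E₀ > 0, let σ̂₁ : Ḡ×I'×I → ℝ be continuous and C¹ in (E',E) with continuous derivatives, and let ψ : Ḡ×S×I → ℝ be continuous and Lipschitz in (ω,E) uniformly in x, with norm ‖ψ‖ := sup|ψ| + (uniform Lipschitz seminorm in (ω,E)). For κ > 1 define the truncated first-order Hadamard operator (K_{1,1,κ}ψ)(x,ω,E) := p.f.∫_E^{κE} (1/(E'−E))·σ̂₁(x,E',E)·( ∫_0^{2π} ψ(x, γ(E',E,ω)(s), E') ds ) dE' and its approximation (K̃_{1,1,κ}ψ)(x,ω,E) := 2π·log(κE−E)·σ̂₁(x,E,E)·ψ(x,ω,E). Then there exists a constant C, independent of ψ, κ, x, ω, E, such that for all (x,ω,E) ∈ Ḡ×S×I with κE ≤ E_m: |(K_{1,1,κ}ψ)(x,ω,E) − (K̃_{1,1,κ}ψ)(x,ω,E)| ≤ C·‖ψ‖·(κ−1)^{1/2}. -/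

import Mathlib

open MeasureTheory Filter Set Metric
open scoped Topology Real

noncomputable section

abbrev E3 : Type := EuclideanSpace ℝ (Fin 3)

/-- The vector `(a,b,c) ∈ ℝ³` as an element of `EuclideanSpace ℝ (Fin 3)`. -/
def vec3 (a b c : ℝ) : E3 := (EuclideanSpace.equiv (Fin 3) ℝ).symm ![a, b, c]

/-- The third standard basis vector `e₃`. -/
def e₃ : E3 := EuclideanSpace.single 2 1

/-- `μ(E',E) = √( E(E'+2) / (E'(E+2)) )`. -/
def mu (E' E : ℝ) : ℝ := Real.sqrt (E * (E' + 2) / (E' * (E + 2)))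

/-- The parametrization `γ(E',E,ω)(s)` of the circle `{ω' ∈ S : ω'·ω = μ(E',E)}`. -/
def gam (R : E3 → (E3 ≃ₗᵢ[ℝ] E3)) (E' E : ℝ) (ω : E3) (s : ℝ) : E3 :=
  R ω (vec3 (Real.sqrt (1 - mu E' E ^ 2) * Real.cos s)
        (Real.sqrt (1 - mu E' E ^ 2) * Real.sin s) (mu E' E))

/-- Hadamard finite part of order 1 with upper limit `b`. -/
def HasPF1Upper (g : ℝ → ℝ) (x b L : ℝ) : Prop :=
  Tendsto (fun ε : ℝ => (∫ t in (x + ε)..b, g t / (t - x)) + g x * Real.log ε)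
    (𝓝[>] (0 : ℝ)) (𝓝 L)

lemma vec3_apply (a b c : ℝ) (i : Fin 3) : vec3 a b c i = ![a, b, c] i := rfl

lemma e3_eq : e₃ = vec3 0 0 1 := by
  ext i
  fin_cases i <;> simp [vec3_apply, e₃, EuclideanSpace.single_apply]

lemma norm_vec3 (a b c : ℝ) : ‖vec3 a b c‖ = Real.sqrt (a^2 + b^2 + c^2) := by
  rw [EuclideanSpace.norm_eq]
  congr 1
  simp [Fin.sum_univ_three, vec3_apply, sq_abs]

lemma vec3_sub (a b c a' b' c' : ℝ) : vec3 a b c - vec3 a' b' c' = vec3 (a-a') (b-b') (c-c') := by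
  ext i; fin_cases i <;> simp [vec3_apply, PiLp.sub_apply]

lemma continuous_vec3 {α : Type*} [TopologicalSpace α] {f g h : α → ℝ}
    (hf : Continuous f) (hg : Continuous g) (hh : Continuous h) :
    Continuous fun t => vec3 (f t) (g t) (h t) := by
  unfold vec3
  refine Continuous.comp ?_ ?_
  · exact (EuclideanSpace.equiv (Fin 3) ℝ).symm.continuous
  · refine continuous_pi fun i => ?_
    fin_cases i <;> simpa

lemma mu_self {E : ℝ} (hE : 0 < E) : mu E E = 1 := by
  unfold mu
  rw [div_self (by positivity), Real.sqrt_one]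

lemma mu_sq {t E : ℝ} (ht : 0 < t) (hE : 0 < E) :
    mu t E ^ 2 = E * (t + 2) / (t * (E + 2)) := by
  unfold mu; rw [Real.sq_sqrt (by positivity)]

lemma one_sub_mu_sq {t E : ℝ} (ht : 0 < t) (hE : 0 < E) :
    1 - mu t E ^ 2 = 2 * (t - E) / (t * (E + 2)) := by
  rw [mu_sq ht hE]; field_simp; ring

lemma mu_le_one {t E : ℝ} (ht : 0 < t) (hE : 0 < E) (hEt : E ≤ t) : mu t E ≤ 1 := by
  unfold mu
  rw [show (1:ℝ) = Real.sqrt 1 from Real.sqrt_one.symm]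
  apply Real.sqrt_le_sqrt
  rw [div_le_one (by positivity)]
  nlinarith

lemma mu_nonneg (t E : ℝ) : 0 ≤ mu t E := Real.sqrt_nonneg _

lemma norm_gam (R : E3 → (E3 ≃ₗᵢ[ℝ] E3)) {t E : ℝ} (ht : 0 < t) (hE : 0 < E)
    (hEt : E ≤ t) (ω : E3) (s : ℝ) : ‖gam R t E ω s‖ = 1 := by
  have h1 : mu t E ^ 2 ≤ 1 := by
    nlinarith [mu_le_one ht hE hEt, mu_nonneg t E]
  rw [gam, (R ω).norm_map, norm_vec3]
  have : (Real.sqrt (1 - mu t E ^ 2) * Real.cos s) ^ 2 +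
      (Real.sqrt (1 - mu t E ^ 2) * Real.sin s) ^ 2 + mu t E ^ 2 = 1 := by
    have hs : Real.sqrt (1 - mu t E ^ 2) ^ 2 = 1 - mu t E ^ 2 :=
      Real.sq_sqrt (by linarith)
    have := Real.sin_sq_add_cos_sq s
    nlinarith [hs]
  rw [this, Real.sqrt_one]

lemma gam_self (R : E3 → (E3 ≃ₗᵢ[ℝ] E3)) (hR : ∀ ω : E3, ‖ω‖ = 1 → R ω e₃ = ω)
    {E : ℝ} (hE : 0 < E) {ω : E3} (hω : ‖ω‖ = 1) (s : ℝ) : gam R E E ω s = ω := by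
  have : gam R E E ω s = R ω e₃ := by
    rw [gam, mu_self hE, e3_eq]
    norm_num
  rw [this, hR ω hω]

lemma norm_gam_sub (R : E3 → (E3 ≃ₗᵢ[ℝ] E3)) (hR : ∀ ω : E3, ‖ω‖ = 1 → R ω e₃ = ω)
    {t E E₀ : ℝ} (hE₀ : 0 < E₀) (hE : E₀ ≤ E) (ht : E₀ ≤ t) (hEt : E ≤ t)
    {ω : E3} (hω : ‖ω‖ = 1) (s : ℝ) :
    ‖gam R t E ω s - ω‖ ≤ (2 / E₀) * Real.sqrt (t - E) := by
  have htp : 0 < t := lt_of_lt_of_le hE₀ ht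
  have hEp : 0 < E := lt_of_lt_of_le hE₀ hE
  have hmu1 : mu t E ≤ 1 := mu_le_one htp hEp hEt
  have hmu0 : 0 ≤ mu t E := mu_nonneg t E
  have hsq : 1 - mu t E ^ 2 = 2 * (t - E) / (t * (E + 2)) := one_sub_mu_sq htp hEp
  have hs : Real.sqrt (1 - mu t E ^ 2) ^ 2 = 1 - mu t E ^ 2 :=
    Real.sq_sqrt (by nlinarith)
  have step : ‖gam R t E ω s - ω‖ = Real.sqrt
      ((Real.sqrt (1 - mu t E ^ 2) * Real.cos s - 0) ^ 2 +
      (Real.sqrt (1 - mu t E ^ 2) * Real.sin s - 0) ^ 2 + (mu t E - 1) ^ 2) := by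
    calc ‖gam R t E ω s - ω‖
        = ‖(R ω) (vec3 (Real.sqrt (1 - mu t E ^ 2) * Real.cos s)
            (Real.sqrt (1 - mu t E ^ 2) * Real.sin s) (mu t E)) - (R ω) e₃‖ := by
          rw [gam, hR ω hω]
      _ = ‖vec3 (Real.sqrt (1 - mu t E ^ 2) * Real.cos s)
            (Real.sqrt (1 - mu t E ^ 2) * Real.sin s) (mu t E) - e₃‖ := by
          rw [← LinearIsometryEquiv.map_sub, (R ω).norm_map]
      _ = _ := by rw [e3_eq, vec3_sub, norm_vec3]
  rw [step]
  have hnorm_sq : (Real.sqrt (1 - mu t E ^ 2) * Real.cos s - 0) ^ 2 +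
      (Real.sqrt (1 - mu t E ^ 2) * Real.sin s - 0) ^ 2 + (mu t E - 1) ^ 2
      = 2 * (1 - mu t E) := by
    have := Real.sin_sq_add_cos_sq s
    nlinarith [hs]
  rw [hnorm_sq]
  have key : 2 * (1 - mu t E) ≤ (2 / E₀)^2 * (t - E) := by
    have h2 : 2 * (1 - mu t E) ≤ 2 * (1 - mu t E ^ 2) := by nlinarith
    have h3 : 2 * (1 - mu t E ^ 2) ≤ (2/E₀)^2 * (t - E) := by
      rw [hsq]
      have h4 : E₀ * E₀ ≤ t * (E + 2) := by nlinarith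
      have h5 : 2 * (t - E) / (t * (E + 2)) ≤ 2 * (t - E) / (E₀ * E₀) := by
        gcongr
      calc 2 * (2 * (t - E) / (t * (E + 2))) ≤ 2 * (2 * (t - E) / (E₀ * E₀)) := by linarith
        _ = (2/E₀)^2 * (t-E) := by field_simp
    linarith
  calc Real.sqrt (2 * (1 - mu t E)) ≤ Real.sqrt ((2 / E₀)^2 * (t - E)) :=
        Real.sqrt_le_sqrt key
    _ = (2 / E₀) * Real.sqrt (t - E) := by
        rw [Real.sqrt_mul (by positivity), Real.sqrt_sq (by positivity)]

lemma continuousOn_vec3 {α : Type*} [TopologicalSpace α] {f g h : α → ℝ} {s : Set α}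
    (hf : ContinuousOn f s) (hg : ContinuousOn g s) (hh : ContinuousOn h s) :
    ContinuousOn (fun t => vec3 (f t) (g t) (h t)) s := by
  unfold vec3
  apply (EuclideanSpace.equiv (Fin 3) ℝ).symm.continuous.comp_continuousOn
  rw [continuousOn_pi]
  intro i
  fin_cases i <;> simpa

lemma continuousOn_mu {E : ℝ} (hE : 0 < E) :
    ContinuousOn (fun t => mu t E) {t : ℝ | 0 < t} := by
  unfold mu
  apply Real.continuous_sqrt.comp_continuousOn
  apply ContinuousOn.div (by fun_prop) (by fun_prop)
  intro t ht
  have : (0:ℝ) < t := ht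
  positivity

lemma continuousOn_gam (R : E3 → (E3 ≃ₗᵢ[ℝ] E3)) {E : ℝ} (hE : 0 < E) (ω : E3) :
    ContinuousOn (fun p : ℝ × ℝ => gam R p.1 E ω p.2) ({t : ℝ | 0 < t} ×ˢ (univ : Set ℝ)) := by
  unfold gam
  apply (R ω).continuous.comp_continuousOn
  have hmu : ContinuousOn (fun p : ℝ × ℝ => mu p.1 E) ({t : ℝ | 0 < t} ×ˢ (univ : Set ℝ)) :=
    (continuousOn_mu hE).comp continuousOn_fst (fun p hp => hp.1)
  have hsq : ContinuousOn (fun p : ℝ × ℝ => Real.sqrt (1 - mu p.1 E ^ 2))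
      ({t : ℝ | 0 < t} ×ˢ (univ : Set ℝ)) :=
    Real.continuous_sqrt.comp_continuousOn (continuousOn_const.sub (hmu.pow 2))
  exact continuousOn_vec3 (hsq.mul (Real.continuous_cos.comp continuous_snd).continuousOn)
    (hsq.mul (Real.continuous_sin.comp continuous_snd).continuousOn) hmu

lemma norm_fderivWithin_le_iter (f : ℝ × ℝ → ℝ) (s : Set (ℝ × ℝ)) (x : ℝ × ℝ)
    (hx : UniqueDiffWithinAt ℝ s x) :
    ‖fderivWithin ℝ f s x‖ ≤ ‖iteratedFDerivWithin ℝ 1 f s x‖ := by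
  apply ContinuousLinearMap.opNorm_le_bound _ (norm_nonneg _)
  intro v
  have h1 : fderivWithin ℝ f s x v = iteratedFDerivWithin ℝ 1 f s x ![v] := by
    rw [iteratedFDerivWithin_one_apply hx]
    simp
  rw [h1]
  calc ‖iteratedFDerivWithin ℝ 1 f s x ![v]‖
      ≤ ‖iteratedFDerivWithin ℝ 1 f s x‖ * ∏ i, ‖(![v] : Fin 1 → ℝ × ℝ) i‖ :=
        (iteratedFDerivWithin ℝ 1 f s x).le_opNorm _
    _ = ‖iteratedFDerivWithin ℝ 1 f s x‖ * ‖v‖ := by simp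

lemma continuous_gam_s (R : E3 → (E3 ≃ₗᵢ[ℝ] E3)) (t E : ℝ) (ω : E3) :
    Continuous fun s => gam R t E ω s := by
  unfold gam
  exact (R ω).continuous.comp (continuous_vec3 (continuous_const.mul Real.continuous_cos)
    (continuous_const.mul Real.continuous_sin) continuous_const)

lemma continuousOn_gam_t (R : E3 → (E3 ≃ₗᵢ[ℝ] E3)) {E : ℝ} (hE : 0 < E) (ω : E3) (s : ℝ) :
    ContinuousOn (fun t => gam R t E ω s) {t : ℝ | 0 < t} := by
  unfold gam
  apply (R ω).continuous.comp_continuousOn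
  have hmu : ContinuousOn (fun t => mu t E) {t : ℝ | 0 < t} := continuousOn_mu hE
  have hsq : ContinuousOn (fun t => Real.sqrt (1 - mu t E ^ 2)) {t : ℝ | 0 < t} :=
    Real.continuous_sqrt.comp_continuousOn (continuousOn_const.sub (hmu.pow 2))
  exact continuousOn_vec3 (hsq.mul continuousOn_const) (hsq.mul continuousOn_const) hmu

set_option maxHeartbeats 1000000 in
/-- error estimate for the truncated first-order Hadamard operator
`(K_{1,1,κ}ψ)(x,ω,E) = p.f.∫_E^{κE} σ̂₁(x,E',E)(∫_0^{2π} ψ(x,γ(E',E,ω)(s),E') ds)/(E'−E) dE'`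
against its approximation `(K̃_{1,1,κ}ψ)(x,ω,E) = 2π·log(κE−E)·σ̂₁(x,E,E)·ψ(x,ω,E)`:
`|K_{1,1,κ}ψ − K̃_{1,1,κ}ψ| ≤ C·‖ψ‖·(κ−1)^{1/2}` with `C` independent of
`ψ, κ, x, ω, E` (here `‖ψ‖ ≤ M + H` with `M` a sup bound and `H` a uniform Lipschitz
constant in `(ω,E)`). -/
theorem stmt18 (G : Set E3) (hGopen : IsOpen G) (hGbdd : Bornology.IsBounded G)
    (E₀ Em : ℝ) (hE₀ : 0 < E₀) (hI : E₀ < Em)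
    (σ₁ : E3 → ℝ → ℝ → ℝ)
    (hσc : ContinuousOn (fun p : E3 × ℝ × ℝ => σ₁ p.1 p.2.1 p.2.2)
      (closure G ×ˢ Set.Icc E₀ Em ×ˢ Set.Icc E₀ Em))
    (hσcd : ∀ x ∈ closure G, ContDiffOn ℝ 1 (fun q : ℝ × ℝ => σ₁ x q.1 q.2)
      (Set.Icc E₀ Em ×ˢ Set.Icc E₀ Em))
    (hσdc : ∀ i : ℕ, i ≤ 1 → ContinuousOn (fun p : E3 × ℝ × ℝ =>
      iteratedFDerivWithin ℝ i (fun q : ℝ × ℝ => σ₁ p.1 q.1 q.2)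
        (Set.Icc E₀ Em ×ˢ Set.Icc E₀ Em) (p.2.1, p.2.2))
      (closure G ×ˢ Set.Icc E₀ Em ×ˢ Set.Icc E₀ Em))
    (R : E3 → (E3 ≃ₗᵢ[ℝ] E3)) (hR : ∀ ω : E3, ‖ω‖ = 1 → R ω e₃ = ω) :
    ∃ C : ℝ, ∀ (ψ : E3 → E3 → ℝ → ℝ) (M H : ℝ),
      ContinuousOn (fun p : E3 × E3 × ℝ => ψ p.1 p.2.1 p.2.2)
        (closure G ×ˢ sphere (0 : E3) 1 ×ˢ Set.Icc E₀ Em) →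
      (∀ x ∈ closure G, ∀ ω ∈ sphere (0 : E3) 1, ∀ E ∈ Set.Icc E₀ Em, |ψ x ω E| ≤ M) →
      (∀ x ∈ closure G, ∀ ω₁ ∈ sphere (0 : E3) 1, ∀ E₁ ∈ Set.Icc E₀ Em,
        ∀ ω₂ ∈ sphere (0 : E3) 1, ∀ E₂ ∈ Set.Icc E₀ Em,
        |ψ x ω₁ E₁ - ψ x ω₂ E₂| ≤ H * (‖ω₁ - ω₂‖ + |E₁ - E₂|)) →
      ∀ κ : ℝ, 1 < κ →
      ∀ x ∈ closure G, ∀ ω ∈ sphere (0 : E3) 1, ∀ E ∈ Set.Icc E₀ Em, κ * E ≤ Em →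
        ∃ L : ℝ,
          HasPF1Upper
            (fun E' => σ₁ x E' E * ∫ s in (0:ℝ)..(2 * π), ψ x (gam R E' E ω s) E')
            E (κ * E) L ∧
          |L - 2 * π * Real.log (κ * E - E) * σ₁ x E E * ψ x ω E|
            ≤ C * (M + H) * (κ - 1) ^ (1/2 : ℝ) := by
  have hKcomp : IsCompact (closure G ×ˢ Set.Icc E₀ Em ×ˢ Set.Icc E₀ Em) :=
    hGbdd.isCompact_closure.prod (isCompact_Icc.prod isCompact_Icc)
  obtain ⟨S₀, hS₀⟩ := hKcomp.exists_bound_of_continuousOn hσc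
  obtain ⟨L₀, hL₀⟩ := hKcomp.exists_bound_of_continuousOn (hσdc 1 le_rfl)
  set S := max S₀ 0 with hSdef
  set Lσ := max L₀ 0 with hLσdef
  have hS0 : (0:ℝ) ≤ S := le_max_right _ _
  have hL0 : (0:ℝ) ≤ Lσ := le_max_right _ _
  have hSb : ∀ p ∈ (closure G ×ˢ Set.Icc E₀ Em ×ˢ Set.Icc E₀ Em), |σ₁ p.1 p.2.1 p.2.2| ≤ S :=
    fun p hp => le_trans (le_of_eq (Real.norm_eq_abs _).symm) ((hS₀ p hp).trans (le_max_left _ _))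
  have hLb : ∀ p ∈ (closure G ×ˢ Set.Icc E₀ Em ×ˢ Set.Icc E₀ Em),
      ‖iteratedFDerivWithin ℝ 1 (fun q : ℝ × ℝ => σ₁ p.1 q.1 q.2)
        (Set.Icc E₀ Em ×ˢ Set.Icc E₀ Em) (p.2.1, p.2.2)‖ ≤ Lσ :=
    fun p hp => (hL₀ p hp).trans (le_max_left _ _)
  set c₀ : ℝ := 2 / E₀ with hc₀def
  have hc₀0 : 0 ≤ c₀ := by positivity
  refine ⟨2*π*(Lσ + S) * (Em * (Em/E₀) ^ (1/2 : ℝ) + 2*c₀ * Em ^ (1/2 : ℝ)), ?_⟩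
  intro ψ M H hψc hψM hψH κ hκ x hx ω hω E hE hbEm
  have hω1 : ‖ω‖ = 1 := by rwa [mem_sphere_zero_iff_norm] at hω
  have hE0 : 0 < E := lt_of_lt_of_le hE₀ hE.1
  have hEm0 : 0 < Em := lt_trans hE₀ hI
  set b := κ * E with hbdef
  have hEb : E < b := by rw [hbdef]; nlinarith
  have hbE : 0 < b - E := by linarith
  have hIccsub : Set.Icc E b ⊆ Set.Icc E₀ Em :=
    fun t ht => ⟨le_trans hE.1 ht.1, le_trans ht.2 hbEm⟩
  have hM0 : 0 ≤ M := (abs_nonneg _).trans (hψM x hx ω hω E hE)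
  have hH0 : 0 ≤ H := by
    have h1 := hψH x hx ω hω E₀ ⟨le_refl _, hI.le⟩ ω hω Em ⟨hI.le, le_refl _⟩
    have h2 : (0:ℝ) ≤ H * (‖ω - ω‖ + |E₀ - Em|) := le_trans (abs_nonneg _) h1
    have h3 : ‖ω - ω‖ = 0 := by simp
    have h4 : 0 < |E₀ - Em| := abs_pos.mpr (by linarith)
    rw [h3, zero_add] at h2
    nlinarith
  set Φ : ℝ → ℝ := fun t => ∫ s in (0:ℝ)..(2*π), ψ x (gam R t E ω s) t with hΦdef
  set g : ℝ → ℝ := fun t => σ₁ x t E * ∫ s in (0:ℝ)..(2 * π), ψ x (gam R t E ω s) t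
    with hgdef
  have hgΦ : ∀ t, g t = σ₁ x t E * Φ t := fun t => rfl
  -- pointwise facts
  have hgam_mem : ∀ t ∈ Set.Icc E b, ∀ s : ℝ, gam R t E ω s ∈ sphere (0:E3) 1 := by
    intro t ht s
    rw [mem_sphere_zero_iff_norm]
    exact norm_gam R (lt_of_lt_of_le hE0 ht.1) hE0 ht.1 ω s
  have hcont_s : ∀ t ∈ Set.Icc E b, Continuous fun s => ψ x (gam R t E ω s) t := by
    intro t ht
    have hcc := hψc.comp_continuous
      (continuous_const.prodMk ((continuous_gam_s R t E ω).prodMk continuous_const))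
      (fun s => ⟨hx, hgam_mem t ht s, hIccsub ht⟩)
    exact hcc
  have hψbound : ∀ t ∈ Set.Icc E b, ∀ s : ℝ, |ψ x (gam R t E ω s) t| ≤ M :=
    fun t ht s => hψM x hx _ (hgam_mem t ht s) t (hIccsub ht)
  have hΦ_bound : ∀ t ∈ Set.Icc E b, |Φ t| ≤ 2 * π * M := by
    intro t ht
    have h1 := intervalIntegral.norm_integral_le_of_norm_le_const (C := M)
      (f := fun s => ψ x (gam R t E ω s) t) (a := 0) (b := 2*π)
      (fun s _ => hψbound t ht s)
    calc |Φ t| ≤ M * |2*π - 0| := h1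
      _ = 2*π*M := by
          rw [sub_zero, abs_of_nonneg (by positivity : (0:ℝ) ≤ 2*π)]; ring
  have hΦE : Φ E = 2 * π * ψ x ω E := by
    have heq : ∀ s ∈ Set.uIcc (0:ℝ) (2*π), ψ x (gam R E E ω s) E = ψ x ω E :=
      fun s _ => by rw [gam_self R hR hE0 hω1]
    simp only [hΦdef]
    rw [intervalIntegral.integral_congr heq, intervalIntegral.integral_const]
    simp [smul_eq_mul]
  have hΦ_diff : ∀ t ∈ Set.Icc E b,
      |Φ t - Φ E| ≤ 2*π*(H * (c₀ * Real.sqrt (t - E) + (t - E))) := by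
    intro t ht
    have hint : IntervalIntegrable (fun s => ψ x (gam R t E ω s) t) volume 0 (2*π) :=
      (hcont_s t ht).intervalIntegrable _ _
    have hsub : Φ t - Φ E
        = ∫ s in (0:ℝ)..(2*π), (ψ x (gam R t E ω s) t - ψ x ω E) := by
      rw [intervalIntegral.integral_sub hint intervalIntegrable_const,
        intervalIntegral.integral_const, hΦE]
      simp [smul_eq_mul]; rfl
    have hkey : ∀ s ∈ Set.uIoc (0:ℝ) (2*π),
        ‖ψ x (gam R t E ω s) t - ψ x ω E‖ ≤ H * (c₀ * Real.sqrt (t - E) + (t - E)) := by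
      intro s _
      rw [Real.norm_eq_abs]
      have h1 := hψH x hx _ (hgam_mem t ht s) t (hIccsub ht) ω hω E hE
      have h2 : ‖gam R t E ω s - ω‖ ≤ c₀ * Real.sqrt (t - E) := by
        rw [hc₀def]
        exact norm_gam_sub R hR hE₀ hE.1 (hIccsub ht).1 ht.1 hω1 s
      have h3 : |t - E| = t - E := abs_of_nonneg (by linarith [ht.1])
      refine h1.trans ?_
      apply mul_le_mul_of_nonneg_left _ hH0
      rw [h3]
      exact add_le_add h2 le_rfl
    have h4 := intervalIntegral.norm_integral_le_of_norm_le_const hkey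
    rw [hsub]
    calc |∫ s in (0:ℝ)..(2*π), (ψ x (gam R t E ω s) t - ψ x ω E)|
        ≤ H * (c₀ * Real.sqrt (t - E) + (t - E)) * |2*π - 0| := h4
      _ = 2*π*(H * (c₀ * Real.sqrt (t - E) + (t - E))) := by
          rw [sub_zero, abs_of_nonneg (by positivity : (0:ℝ) ≤ 2*π)]; ring
  -- σ₁ Lipschitz in first energy variable, uniformly
  have huniq : UniqueDiffOn ℝ (Set.Icc E₀ Em ×ˢ Set.Icc E₀ Em) :=
    (uniqueDiffOn_Icc hI).prod (uniqueDiffOn_Icc hI)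
  have hσ_lip : ∀ t ∈ Set.Icc E b, |σ₁ x t E - σ₁ x E E| ≤ Lσ * (t - E) := by
    intro t ht
    have hconv : Convex ℝ (Set.Icc E₀ Em ×ˢ Set.Icc E₀ Em) :=
      (convex_Icc _ _).prod (convex_Icc _ _)
    have hdiff : DifferentiableOn ℝ (fun q : ℝ × ℝ => σ₁ x q.1 q.2)
        (Set.Icc E₀ Em ×ˢ Set.Icc E₀ Em) := (hσcd x hx).differentiableOn one_ne_zero
    have hbound : ∀ q ∈ (Set.Icc E₀ Em ×ˢ Set.Icc E₀ Em),
        ‖fderivWithin ℝ (fun q : ℝ × ℝ => σ₁ x q.1 q.2)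
          (Set.Icc E₀ Em ×ˢ Set.Icc E₀ Em) q‖ ≤ Lσ := by
      intro q hq
      refine (norm_fderivWithin_le_iter _ _ _ (huniq q hq)).trans ?_
      have := hLb (x, q.1, q.2) ⟨hx, hq.1, hq.2⟩
      simpa using this
    have hmem1 : ((t, E) : ℝ × ℝ) ∈ Set.Icc E₀ Em ×ˢ Set.Icc E₀ Em := ⟨hIccsub ht, hE⟩
    have hmem2 : ((E, E) : ℝ × ℝ) ∈ Set.Icc E₀ Em ×ˢ Set.Icc E₀ Em := ⟨hE, hE⟩
    have hmv := hconv.norm_image_sub_le_of_norm_fderivWithin_le hdiff hbound hmem2 hmem1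
    have hnorm : ‖((t, E) : ℝ × ℝ) - (E, E)‖ = t - E := by
      rw [Prod.mk_sub_mk, Prod.norm_def]
      simp only [Real.norm_eq_abs, sub_self, abs_zero]
      rw [max_eq_left (abs_nonneg _), abs_of_nonneg (by linarith [ht.1])]
    calc |σ₁ x t E - σ₁ x E E|
        = ‖(fun q : ℝ × ℝ => σ₁ x q.1 q.2) (t,E) - (fun q : ℝ × ℝ => σ₁ x q.1 q.2) (E,E)‖ := rfl
      _ ≤ Lσ * ‖((t,E) : ℝ × ℝ) - (E,E)‖ := hmv
      _ = Lσ * (t - E) := by rw [hnorm]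
  have hσEb : |σ₁ x E E| ≤ S := hSb (x, E, E) ⟨hx, hE, hE⟩
  -- continuity of g
  have hσcont_t : ContinuousOn (fun t => σ₁ x t E) (Set.Icc E b) := by
    have hmap : Continuous fun t : ℝ => ((x, t, E) : E3 × ℝ × ℝ) :=
      continuous_const.prodMk (continuous_id.prodMk continuous_const)
    exact hσc.comp hmap.continuousOn (fun t ht => ⟨hx, hIccsub ht, hE⟩)
  have hΦcont : ContinuousOn Φ (Set.Icc E b) := by
    intro t₀ ht₀
    simp only [hΦdef]
    apply intervalIntegral.continuousWithinAt_of_dominated_interval (bound := fun _ => M)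
    · filter_upwards [self_mem_nhdsWithin] with t ht
      exact (hcont_s t ht).aestronglyMeasurable
    · filter_upwards [self_mem_nhdsWithin] with t ht
      apply ae_of_all
      intro s hs
      rw [Real.norm_eq_abs]; exact hψbound t ht s
    · exact intervalIntegrable_const
    · apply ae_of_all
      intro s hs
      have hcg : ContinuousOn (fun t => gam R t E ω s) (Set.Icc E b) :=
        (continuousOn_gam_t R hE0 ω s).mono (fun t ht => lt_of_lt_of_le hE0 ht.1)
      have hmapc : ContinuousOn (fun t => ((x, gam R t E ω s, t) : E3 × E3 × ℝ))
          (Set.Icc E b) := continuousOn_const.prodMk (hcg.prodMk continuousOn_id)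
      exact (hψc.comp hmapc (fun t ht => ⟨hx, hgam_mem t ht s, hIccsub ht⟩)) t₀ ht₀
  have hgcont : ContinuousOn g (Set.Icc E b) := by
    have := hσcont_t.mul hΦcont
    exact this
  -- the regularized integrand and its majorant
  set A := 2*π*Lσ*M + 2*π*S*H with hAdef
  set B := 2*π*S*H*c₀ with hBdef
  have hπ0 : (0:ℝ) < π := Real.pi_pos
  have hA0 : 0 ≤ A := by rw [hAdef]; positivity
  have hB0 : 0 ≤ B := by rw [hBdef]; positivity
  set h : ℝ → ℝ := fun t => (g t - g E) / (t - E) with hhdef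
  have hptwise : ∀ t ∈ Set.Ioc E b, |h t| ≤ A + B * (t - E) ^ (-(1/2) : ℝ) := by
    intro t ht
    have htIcc : t ∈ Set.Icc E b := Set.Ioc_subset_Icc_self ht
    have hu : 0 < t - E := by linarith [ht.1]
    have hsq : Real.sqrt (t-E) * Real.sqrt (t-E) = t - E := Real.mul_self_sqrt hu.le
    have hsqpos : 0 < Real.sqrt (t - E) := Real.sqrt_pos.mpr hu
    have hnum : |g t - g E| ≤ A * (t - E) + B * Real.sqrt (t - E) := by
      have hdecomp : g t - g E
          = (σ₁ x t E - σ₁ x E E) * Φ t + σ₁ x E E * (Φ t - Φ E) := by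
        rw [hgΦ, hgΦ]; ring
      calc |g t - g E|
          = |(σ₁ x t E - σ₁ x E E) * Φ t + σ₁ x E E * (Φ t - Φ E)| := by rw [hdecomp]
        _ ≤ |(σ₁ x t E - σ₁ x E E) * Φ t| + |σ₁ x E E * (Φ t - Φ E)| := abs_add_le _ _
        _ = |σ₁ x t E - σ₁ x E E| * |Φ t| + |σ₁ x E E| * |Φ t - Φ E| := by
            rw [abs_mul, abs_mul]
        _ ≤ (Lσ * (t - E)) * (2*π*M)
            + S * (2*π*(H * (c₀ * Real.sqrt (t - E) + (t - E)))) := by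
            apply add_le_add
            · exact mul_le_mul (hσ_lip t htIcc) (hΦ_bound t htIcc) (abs_nonneg _)
                (mul_nonneg hL0 hu.le)
            · exact mul_le_mul hσEb (hΦ_diff t htIcc) (abs_nonneg _) hS0
        _ = A * (t - E) + B * Real.sqrt (t - E) := by
            rw [hAdef, hBdef]; ring
    have hrw : (t - E) ^ (-(1/2) : ℝ) = (Real.sqrt (t - E))⁻¹ := by
      rw [Real.rpow_neg hu.le, Real.sqrt_eq_rpow]
    calc |h t| = |g t - g E| / (t - E) := by
          rw [hhdef]; rw [abs_div, abs_of_pos hu]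
      _ ≤ (A * (t - E) + B * Real.sqrt (t - E)) / (t - E) := by
          exact div_le_div_of_nonneg_right hnum hu.le
      _ = A + B * (t - E) ^ (-(1/2) : ℝ) := by
          rw [hrw, div_eq_iff (ne_of_gt hu)]
          field_simp
          nlinarith [hsq]
  have hrpow_int : IntervalIntegrable (fun t => (t - E) ^ (-(1/2):ℝ)) volume E b := by
    have h1 : IntervalIntegrable (fun u : ℝ => u ^ (-(1/2):ℝ)) volume 0 (b - E) :=
      intervalIntegral.intervalIntegrable_rpow' (by norm_num)
    have h2 := h1.comp_sub_right E
    simpa using h2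
  have hφ_int : IntervalIntegrable (fun t => A + B * (t - E) ^ (-(1/2):ℝ)) volume E b :=
    intervalIntegrable_const.add (hrpow_int.const_mul B)
  have hh_contOn : ContinuousOn h (Set.Ioc E b) := by
    apply ContinuousOn.div ((hgcont.mono Set.Ioc_subset_Icc_self).sub continuousOn_const)
      (continuousOn_id.sub continuousOn_const)
    intro t ht
    exact sub_ne_zero.mpr (ne_of_gt ht.1)
  have hh_int : IntervalIntegrable h volume E b := by
    rw [intervalIntegrable_iff_integrableOn_Ioc_of_le hEb.le]
    apply MeasureTheory.Integrable.mono'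
      ((intervalIntegrable_iff_integrableOn_Ioc_of_le hEb.le).mp hφ_int)
      (hh_contOn.aestronglyMeasurable measurableSet_Ioc)
    apply (ae_restrict_iff' measurableSet_Ioc).mpr (ae_of_all _ ?_)
    intro t ht
    rw [Real.norm_eq_abs]
    exact hptwise t ht
  have hrpow_val : ∫ t in E..b, (t - E) ^ (-(1/2):ℝ) = 2 * (b - E) ^ ((1/2):ℝ) := by
    have h1 : (∫ t in E..b, (t - E) ^ (-(1/2):ℝ))
        = ∫ u in (E - E)..(b - E), u ^ (-(1/2):ℝ) :=
      intervalIntegral.integral_comp_sub_right (fun u => u ^ (-(1/2):ℝ)) E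
    rw [h1, sub_self, integral_rpow (Or.inl (by norm_num))]
    have he : (-(1/2) : ℝ) + 1 = 1/2 := by norm_num
    rw [he, Real.zero_rpow (by norm_num)]
    ring
  have hint_bound : |∫ t in E..b, h t| ≤ A * (b - E) + 2*B*(b - E) ^ ((1/2):ℝ) := by
    have hb1 : ∀ᵐ t ∂(volume.restrict (Set.uIoc E b)),
        ‖h t‖ ≤ A + B * (t - E) ^ (-(1/2):ℝ) := by
      rw [Set.uIoc_of_le hEb.le]
      apply (ae_restrict_iff' measurableSet_Ioc).mpr (ae_of_all _ ?_)
      intro t ht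
      rw [Real.norm_eq_abs]
      exact hptwise t ht
    have h2 := intervalIntegral.norm_integral_le_of_norm_le hEb.le
      (by rw [Set.uIoc_of_le hEb.le] at hb1; exact (ae_restrict_iff' measurableSet_Ioc).mp hb1) hφ_int
    rw [Real.norm_eq_abs] at h2
    refine h2.trans ?_
    have hval : (∫ t in E..b, (A + B * (t - E) ^ (-(1/2):ℝ)))
        = A*(b-E) + 2*B*(b-E) ^ ((1/2):ℝ) := by
      rw [intervalIntegral.integral_add intervalIntegrable_const (hrpow_int.const_mul B),
        intervalIntegral.integral_const, intervalIntegral.integral_const_mul, hrpow_val]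
      simp [smul_eq_mul]; ring
    rw [hval]
  -- the finite-part limit
  refine ⟨(∫ t in E..b, h t) + g E * Real.log (b - E), ?_, ?_⟩
  · unfold HasPF1Upper
    have heq : ∀ᶠ ε in 𝓝[>] (0:ℝ),
        ((∫ t in (E+ε)..b, g t / (t - E)) + g E * Real.log ε)
          = (∫ t in (E+ε)..b, h t) + g E * Real.log (b - E) := by
      filter_upwards [Ioo_mem_nhdsGT_of_mem (Set.left_mem_Ico.mpr hbE)] with ε hε
      have hε0 : 0 < ε := hε.1
      have hεb : E + ε ≤ b := by linarith [hε.2]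
      have hEε : E < E + ε := by linarith
      have hsubset : Set.Icc (E+ε) b ⊆ Set.Icc E b := Set.Icc_subset_Icc (by linarith) le_rfl
      have hne : ∀ t ∈ Set.Icc (E+ε) b, t - E ≠ 0 :=
        fun t ht => sub_ne_zero.mpr (ne_of_gt (lt_of_lt_of_le hEε ht.1))
      have hcont1 : ContinuousOn (fun t => g t / (t - E)) (Set.Icc (E+ε) b) :=
        ContinuousOn.div (hgcont.mono hsubset) (continuousOn_id.sub continuousOn_const) hne
      have hcont2 : ContinuousOn (fun t => g E / (t - E)) (Set.Icc (E+ε) b) :=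
        ContinuousOn.div continuousOn_const (continuousOn_id.sub continuousOn_const) hne
      have hcont3 : ContinuousOn h (Set.Icc (E+ε) b) :=
        hh_contOn.mono (fun t ht => ⟨lt_of_lt_of_le hEε ht.1, ht.2⟩)
      have hint1 : IntervalIntegrable (fun t => g t / (t - E)) volume (E+ε) b :=
        hcont1.intervalIntegrable_of_Icc hεb
      have hint2 : IntervalIntegrable (fun t => g E / (t - E)) volume (E+ε) b :=
        hcont2.intervalIntegrable_of_Icc hεb
      have hint3 : IntervalIntegrable h volume (E+ε) b :=
        hcont3.intervalIntegrable_of_Icc hεb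
      have hsplit : (∫ t in (E+ε)..b, g t / (t - E))
          = (∫ t in (E+ε)..b, h t) + ∫ t in (E+ε)..b, g E / (t - E) := by
        rw [← intervalIntegral.integral_add hint3 hint2]
        apply intervalIntegral.integral_congr
        intro t _
        simp only [hhdef]
        rw [← add_div, sub_add_cancel]
      have hlog : (∫ t in (E+ε)..b, g E / (t - E))
          = g E * (Real.log (b - E) - Real.log ε) := by
        have h1 : (∫ t in (E+ε)..b, g E / (t - E))
            = g E * ∫ t in (E+ε)..b, (t - E)⁻¹ := by
          rw [← intervalIntegral.integral_const_mul]
          apply intervalIntegral.integral_congr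
          intro t _
          exact div_eq_mul_inv _ _
        rw [h1]
        have h2 : (∫ t in (E+ε)..b, (t - E)⁻¹) = ∫ u in ((E+ε)-E)..(b-E), u⁻¹ :=
          intervalIntegral.integral_comp_sub_right (fun u => u⁻¹) E
        have h3 : E + ε - E = ε := by ring
        rw [h2, h3, integral_inv_of_pos hε0 hbE, Real.log_div (ne_of_gt hbE) (ne_of_gt hε0)]
      rw [hsplit, hlog]; ring
    have htends : Tendsto (fun ε => (∫ t in (E+ε)..b, h t) + g E * Real.log (b - E))
        (𝓝[>] (0:ℝ)) (𝓝 ((∫ t in E..b, h t) + g E * Real.log (b - E))) := by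
      apply Tendsto.add _ tendsto_const_nhds
      have hIntOn : IntegrableOn h (Set.uIcc E b) volume := by
        rw [Set.uIcc_of_le hEb.le, integrableOn_Icc_iff_integrableOn_Ioc]
        exact (intervalIntegrable_iff_integrableOn_Ioc_of_le hEb.le).mp hh_int
      have hco : ContinuousOn (fun u => ∫ t in u..b, h t) (Set.uIcc E b) :=
        intervalIntegral.continuousOn_primitive_interval_left hIntOn
      have hmap : Tendsto (fun ε : ℝ => E + ε) (𝓝[>] (0:ℝ)) (𝓝[Set.uIcc E b] E) := by
        apply tendsto_nhdsWithin_of_tendsto_nhds_of_eventually_within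
        · have h1 : Tendsto (fun ε : ℝ => E + ε) (𝓝 (0:ℝ)) (𝓝 (E + 0)) :=
            (continuous_const.add continuous_id).tendsto 0
          rw [add_zero] at h1
          exact h1.mono_left nhdsWithin_le_nhds
        · filter_upwards [Ioo_mem_nhdsGT_of_mem (Set.left_mem_Ico.mpr hbE)] with ε hε
          rw [Set.uIcc_of_le hEb.le]
          exact ⟨by linarith [hε.1], by linarith [hε.2]⟩
      exact ((hco E Set.left_mem_uIcc).tendsto.comp hmap)
    exact Filter.Tendsto.congr' (heq.mono fun ε hε => hε.symm) htends
  · have hKt : 2 * π * Real.log (b - E) * σ₁ x E E * ψ x ω E = g E * Real.log (b - E) := by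
      rw [hgΦ]
      have : Φ E = 2 * π * ψ x ω E := hΦE
      rw [this]; ring
    have hLsub : (∫ t in E..b, h t) + g E * Real.log (b - E)
        - 2 * π * Real.log (b - E) * σ₁ x E E * ψ x ω E = ∫ t in E..b, h t := by
      rw [hKt]; ring
    rw [hLsub]
    refine hint_bound.trans ?_
    -- numeric endgame
    set q := (κ - 1) ^ ((1/2) : ℝ) with hqdef
    have hκ1 : (0:ℝ) ≤ κ - 1 := by linarith
    have hq0 : 0 ≤ q := Real.rpow_nonneg hκ1 _
    have hbEq : b - E = E * (κ - 1) := by rw [hbdef]; ring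
    have hEEm : E ≤ Em := hE.2
    have h1 : (b - E) ^ ((1/2):ℝ) ≤ Em ^ ((1/2):ℝ) * q := by
      rw [hbEq, Real.mul_rpow hE0.le hκ1]
      exact mul_le_mul_of_nonneg_right
        (Real.rpow_le_rpow hE0.le hEEm (by norm_num)) hq0
    have hκb : κ - 1 ≤ Em / E₀ := by
      rw [le_div_iff₀ hE₀]
      nlinarith [hE.1, hκ.le]
    have hqle : q ≤ (Em/E₀) ^ ((1/2):ℝ) := Real.rpow_le_rpow hκ1 hκb (by norm_num)
    have hqq : κ - 1 = q * q := by
      rw [hqdef, ← Real.rpow_add' hκ1 (by norm_num)]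
      norm_num
    have h2 : b - E ≤ Em * (Em/E₀) ^ ((1/2):ℝ) * q := by
      calc b - E = E * (κ - 1) := hbEq
        _ ≤ Em * (κ - 1) := mul_le_mul_of_nonneg_right hEEm hκ1
        _ = Em * (q * q) := by rw [hqq]
        _ ≤ Em * ((Em/E₀) ^ ((1/2):ℝ) * q) := by
            apply mul_le_mul_of_nonneg_left _ hEm0.le
            exact mul_le_mul_of_nonneg_right hqle hq0
        _ = Em * (Em/E₀) ^ ((1/2):ℝ) * q := by ring
    have hP : A ≤ 2*π*((Lσ+S)*(M+H)) := by
      have e1 : Lσ*M + S*H ≤ (Lσ+S)*(M+H) := by nlinarith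
      calc A = 2*π*(Lσ*M + S*H) := by rw [hAdef]; ring
        _ ≤ 2*π*((Lσ+S)*(M+H)) := by
            apply mul_le_mul_of_nonneg_left e1 (by positivity)
    have hPB : B ≤ 2*π*((Lσ+S)*(M+H))*c₀ := by
      have e1 : S*H ≤ (Lσ+S)*(M+H) := by nlinarith
      calc B = 2*π*(S*H)*c₀ := by rw [hBdef]; ring
        _ ≤ 2*π*((Lσ+S)*(M+H))*c₀ := by
            apply mul_le_mul_of_nonneg_right _ hc₀0
            apply mul_le_mul_of_nonneg_left e1 (by positivity)
    have hX2 : (0:ℝ) ≤ Em * (Em/E₀) ^ ((1/2):ℝ) * q := by positivity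
    have hY2 : (0:ℝ) ≤ Em ^ ((1/2):ℝ) * q := by positivity
    calc A * (b - E) + 2*B*(b - E) ^ ((1/2):ℝ)
        ≤ A * (Em * (Em/E₀) ^ ((1/2):ℝ) * q) + 2*B*(Em ^ ((1/2):ℝ) * q) := by
          apply add_le_add
          · exact mul_le_mul_of_nonneg_left h2 hA0
          · exact mul_le_mul_of_nonneg_left h1 (mul_nonneg (by norm_num) hB0)
      _ ≤ (2*π*((Lσ+S)*(M+H))) * (Em * (Em/E₀) ^ ((1/2):ℝ) * q)
          + 2*(2*π*((Lσ+S)*(M+H))*c₀)*(Em ^ ((1/2):ℝ) * q) := by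
          apply add_le_add
          · exact mul_le_mul_of_nonneg_right hP hX2
          · refine mul_le_mul_of_nonneg_right ?_ hY2
            linarith [hPB]
      _ = 2*π*(Lσ + S) * (Em * (Em/E₀) ^ (1/2 : ℝ) + 2*c₀ * Em ^ (1/2 : ℝ))
            * (M + H) * q := by ring
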